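/- Define matrices D_+^{(n)} of size 2^n-by-2^n over ℝ by the recurrence: D_+^{(0)} = [0] (the 1-by-1 zero matrix), and D_+^{(n+1)} = (1/2)·[[D_+^{(n)}, 0],[I, D_+^{(n)}]] in 2-by-2 block form (so D_+^{(n)} is the transpose of D_−^{(n)}). Then for every n ≥ 0, every 0 ≤ k < 2^n, and every x ∈ (0,1], Σ_{j=1}^∞ 2^{−j}·H_{n,k}((x − 2^{−j})·ε_j(x)) + ∫_x^1 H_{n,k}(t) dt = Σ_{l=0}^{2^n−1} (D_+^{(n)})_{l,k} · H_{n,l}(x). In particular P_+ = C_+ + L' maps each Haar scale subspace W_n = span{H_{n,l} : 0 ≤ l < 2^n} into itself, with matrix D_+^{(n)} in the basis (H_{n,l}). -/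

import Mathlib

open MeasureTheory Set Matrix

noncomputable section

/-- The `k`-th binary digit of `x ∈ (0,1]`: `ε_k(x) = (⌈2^k x⌉ − 1) mod 2`. -/
def eps (k : ℕ) (x : ℝ) : ℤ := (⌈(2 : ℝ) ^ k * x⌉ - 1) % 2

/-- Identification `Fin (2^n) ⊕ Fin (2^n) ≃ Fin (2^(n+1))` (first summand first). -/
def blockEquiv (n : ℕ) : Fin (2 ^ n) ⊕ Fin (2 ^ n) ≃ Fin (2 ^ (n + 1)) :=
  finSumFinEquiv.trans (finCongr (by rw [pow_succ]; omega))

/-- `D_+^{(0)} = [0]`, `D_+^{(n+1)} = (1/2)·[[D_+^{(n)}, 0],[I, D_+^{(n)}]]`. -/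
def Dplus : (n : ℕ) → Matrix (Fin (2 ^ n)) (Fin (2 ^ n)) ℝ
  | 0 => 0
  | n + 1 => Matrix.reindex (blockEquiv n) (blockEquiv n)
      ((1 / 2 : ℝ) • Matrix.fromBlocks (Dplus n) 0 1 (Dplus n))

/-- The mother Haar function `H = χ_{(0,1/2]} − χ_{(1/2,1]}`. -/
def HaarH (x : ℝ) : ℝ :=
  Set.indicator (Set.Ioc 0 (1 / 2)) 1 x - Set.indicator (Set.Ioc (1 / 2) 1) 1 x

/-- `H_{n,k}(x) = 2^{n/2} H(2^n x − k)`. -/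
def HaarNK (n k : ℕ) (x : ℝ) : ℝ := Real.sqrt 2 ^ n * HaarH ((2 : ℝ) ^ n * x - k)

/-! ### Basic lemmas -/

lemma eps_zero_or_one (k : ℕ) (x : ℝ) : eps k x = 0 ∨ eps k x = 1 :=
  Int.emod_two_eq _

lemma HaarH_of_nonpos {y : ℝ} (h : y ≤ 0) : HaarH y = 0 := by
  have h1 : y ∉ Set.Ioc (0:ℝ) (1/2) := fun hy => absurd hy.1 (not_lt.2 h)
  have h2 : y ∉ Set.Ioc (1/2:ℝ) 1 := fun hy => by linarith [hy.1]
  rw [HaarH, Set.indicator_of_notMem h1, Set.indicator_of_notMem h2, sub_zero]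

lemma HaarH_of_gt {y : ℝ} (h : 1 < y) : HaarH y = 0 := by
  have h1 : y ∉ Set.Ioc (0:ℝ) (1/2) := fun hy => by linarith [hy.2]
  have h2 : y ∉ Set.Ioc (1/2:ℝ) 1 := fun hy => by linarith [hy.2]
  rw [HaarH, Set.indicator_of_notMem h1, Set.indicator_of_notMem h2, sub_zero]

lemma HaarH_of_left {y : ℝ} (h0 : 0 < y) (h2 : y ≤ 1/2) : HaarH y = 1 := by
  have h1 : y ∈ Set.Ioc (0:ℝ) (1/2) := ⟨h0, h2⟩
  have h3 : y ∉ Set.Ioc (1/2:ℝ) 1 := fun hy => by linarith [hy.1]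
  rw [HaarH, Set.indicator_of_mem h1, Set.indicator_of_notMem h3, sub_zero, Pi.one_apply]

lemma HaarH_of_right {y : ℝ} (h0 : 1/2 < y) (h2 : y ≤ 1) : HaarH y = -1 := by
  have h1 : y ∉ Set.Ioc (0:ℝ) (1/2) := fun hy => by linarith [hy.2]
  have h3 : y ∈ Set.Ioc (1/2:ℝ) 1 := ⟨h0, h2⟩
  rw [HaarH, Set.indicator_of_notMem h1, Set.indicator_of_mem h3, Pi.one_apply, zero_sub]

lemma abs_HaarH_le (y : ℝ) : |HaarH y| ≤ 1 := by
  rcases le_or_gt y 0 with h | h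
  · rw [HaarH_of_nonpos h]; norm_num
  rcases le_or_gt y (1/2) with h2 | h2
  · rw [HaarH_of_left h h2]; norm_num
  rcases le_or_gt y 1 with h3 | h3
  · rw [HaarH_of_right h2 h3]; norm_num
  · rw [HaarH_of_gt h3]; norm_num

lemma HaarNK_of_le {n k : ℕ} {x : ℝ} (h : (2:ℝ)^n * x ≤ k) : HaarNK n k x = 0 := by
  rw [HaarNK, HaarH_of_nonpos (by linarith), mul_zero]

lemma HaarNK_of_gt {n k : ℕ} {x : ℝ} (h : (k:ℝ) + 1 < (2:ℝ)^n * x) : HaarNK n k x = 0 := by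
  rw [HaarNK, HaarH_of_gt (by linarith), mul_zero]

lemma HaarNK_zero (n k : ℕ) : HaarNK n k 0 = 0 :=
  HaarNK_of_le (by simp [Nat.cast_nonneg])

lemma abs_HaarNK_le (n k : ℕ) (x : ℝ) : |HaarNK n k x| ≤ Real.sqrt 2 ^ n := by
  rw [HaarNK, abs_mul, abs_pow, abs_of_nonneg (Real.sqrt_nonneg 2)]
  calc Real.sqrt 2 ^ n * |HaarH (2 ^ n * x - ↑k)| ≤ Real.sqrt 2 ^ n * 1 := by
        apply mul_le_mul_of_nonneg_left (abs_HaarH_le _) (by positivity)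
    _ = _ := mul_one _

lemma HaarNK_left (n k : ℕ) (x : ℝ) :
    HaarNK (n+1) k x = Real.sqrt 2 * HaarNK n k (2*x) := by
  rw [HaarNK, HaarNK, pow_succ]
  rw [show (2:ℝ)^(n+1) * x - k = 2^n * (2*x) - k by ring]
  ring

lemma HaarNK_right (n k : ℕ) (x : ℝ) :
    HaarNK (n+1) (2^n + k) x = Real.sqrt 2 * HaarNK n k (2*x - 1) := by
  rw [HaarNK, HaarNK, pow_succ]
  rw [show (2:ℝ)^(n+1) * x - ((2^n + k : ℕ) : ℝ) = 2^n * (2*x - 1) - k by push_cast; ring]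
  ring

/-! ### eps lemmas -/

lemma eps_one_of_le {x : ℝ} (hx : 0 < x) (hx2 : x ≤ 1/2) : eps 1 x = 0 := by
  have : ⌈(2:ℝ)^1 * x⌉ = 1 := by
    rw [Int.ceil_eq_iff]
    constructor <;> push_cast <;> linarith
  rw [eps, this]; norm_num

lemma eps_one_of_gt {x : ℝ} (hx : 1/2 < x) (hx1 : x ≤ 1) : eps 1 x = 1 := by
  have : ⌈(2:ℝ)^1 * x⌉ = 2 := by
    rw [Int.ceil_eq_iff]
    constructor <;> push_cast <;> linarith
  rw [eps, this]; norm_num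

lemma eps_succ_left (k : ℕ) (x : ℝ) : eps (k+1) x = eps k (2*x) := by
  rw [eps, eps, show (2:ℝ)^(k+1) * x = 2^k * (2*x) by ring]

lemma eps_succ_right (k : ℕ) (hk : 1 ≤ k) (x : ℝ) : eps (k+1) x = eps k (2*x - 1) := by
  have h1 : (2:ℝ)^(k+1) * x = 2^k * (2*x - 1) + (2^k : ℤ) := by push_cast; ring
  have h2 : (2:ℤ) ∣ 2^k := dvd_pow_self 2 (by omega)
  obtain ⟨m, hm⟩ := h2
  rw [eps, eps, h1, Int.ceil_add_intCast, hm]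
  omega

lemma eps_pos {k : ℕ} (hk : 1 ≤ k) {x : ℝ} (hx : 0 < x) (h : eps k x = 1) :
    (2:ℝ)^(-(k:ℤ)) < x := by
  have hc : 0 < ⌈(2:ℝ)^k * x⌉ := Int.ceil_pos.2 (by positivity)
  have h2 : 2 ≤ ⌈(2:ℝ)^k * x⌉ := by
    rw [eps] at h; omega
  have h3 : (1:ℝ) < 2^k * x := by
    have := Int.ceil_lt_add_one ((2:ℝ)^k * x)
    have : ((2:ℤ):ℝ) ≤ (⌈(2:ℝ)^k * x⌉ : ℝ) := by exact_mod_cast h2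
    push_cast at this ⊢
    linarith [Int.ceil_lt_add_one ((2:ℝ)^k * x)]
  rw [_root_.zpow_neg, zpow_natCast]
  rw [inv_lt_iff_one_lt_mul₀ (by positivity)]
  linarith

/-! ### Binary expansion -/

lemma zpow_eq (j : ℕ) : (2:ℝ)^(-((j:ℤ)+1)) = (2⁻¹)^(j+1) := by
  rw [show -((j:ℤ)+1) = -((j+1 : ℕ):ℤ) by push_cast; ring, _root_.zpow_neg, zpow_natCast,
    inv_pow]

lemma eps_cast_nonneg (k : ℕ) (x : ℝ) : (0:ℝ) ≤ (eps k x : ℝ) := by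
  rcases eps_zero_or_one k x with h | h <;> rw [h] <;> norm_num

lemma eps_cast_le_one (k : ℕ) (x : ℝ) : (eps k x : ℝ) ≤ 1 := by
  rcases eps_zero_or_one k x with h | h <;> rw [h] <;> norm_num

lemma partial_sum_eps {x : ℝ} (hx : x ∈ Set.Ioc (0:ℝ) 1) (m : ℕ) :
    ∑ j ∈ Finset.range m, (eps (j+1) x : ℝ) * (2:ℝ)^(-((j:ℤ)+1)) =
      ((⌈(2:ℝ)^m * x⌉ : ℝ) - 1) / 2^m := by
  induction m with
  | zero =>
    have h1 : ⌈x⌉ = 1 := by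
      rw [Int.ceil_eq_iff]
      constructor <;> push_cast <;> [linarith [hx.1]; exact hx.2]
    simp [h1]
  | succ m ih =>
    rw [Finset.sum_range_succ, ih]
    set c := ⌈(2:ℝ)^m * x⌉ with hc
    have hub : (2:ℝ)^(m+1) * x ≤ 2*c := by
      have := Int.le_ceil ((2:ℝ)^m * x)
      rw [pow_succ]; push_cast; nlinarith
    have hlb : 2*(c:ℝ) - 2 < (2:ℝ)^(m+1) * x := by
      have := Int.ceil_lt_add_one ((2:ℝ)^m * x)
      rw [pow_succ]; push_cast; nlinarith
    have hcc : ⌈(2:ℝ)^(m+1) * x⌉ = 2*c - 1 ∨ ⌈(2:ℝ)^(m+1) * x⌉ = 2*c := by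
      have h1 : ⌈(2:ℝ)^(m+1) * x⌉ ≤ 2*c := by
        apply Int.ceil_le.2; push_cast; linarith
      have h2 : 2*c - 2 < ⌈(2:ℝ)^(m+1) * x⌉ := Int.lt_ceil.2 (by push_cast; linarith)
      omega
    have hp : (0:ℝ) < 2^m := by positivity
    rcases hcc with h | h
    · have he : eps (m+1) x = 0 := by
        rw [eps, h]; omega
      rw [he, h]
      push_cast
      field_simp
      ring
    · have he : eps (m+1) x = 1 := by
        rw [eps, h]; omega
      rw [he, h, zpow_eq]
      push_cast
      simp only [inv_pow]
      field_simp
      ring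

lemma hasSum_eps {x : ℝ} (hx : x ∈ Set.Ioc (0:ℝ) 1) :
    HasSum (fun j : ℕ => (eps (j+1) x : ℝ) * (2:ℝ)^(-((j:ℤ)+1))) x := by
  rw [hasSum_iff_tendsto_nat_of_nonneg
    (fun i => mul_nonneg (eps_cast_nonneg _ _) (by positivity))]
  apply tendsto_of_tendsto_of_tendsto_of_le_of_le (g := fun m : ℕ => x - (2⁻¹:ℝ)^m)
    (h := fun _ : ℕ => x)
  · have h0 : Filter.Tendsto (fun m : ℕ => ((2:ℝ)⁻¹)^m) Filter.atTop (nhds 0) :=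
      tendsto_pow_atTop_nhds_zero_of_lt_one (by norm_num) (by norm_num)
    simpa using tendsto_const_nhds.sub h0
  · exact tendsto_const_nhds
  · intro m
    dsimp only
    rw [partial_sum_eps hx m]
    have hle := Int.le_ceil ((2:ℝ)^m * x)
    have hp : (0:ℝ) < 2^m := by positivity
    rw [le_div_iff₀ hp]
    have hone : (2⁻¹:ℝ)^m * 2^m = 1 := by
      rw [inv_pow, inv_mul_cancel₀ (ne_of_gt hp)]
    nlinarith
  · intro m
    dsimp only
    rw [partial_sum_eps hx m]
    have hlt := Int.ceil_lt_add_one ((2:ℝ)^m * x)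
    have hp : (0:ℝ) < 2^m := by positivity
    rw [div_le_iff₀ hp]
    nlinarith

lemma summable_eps {x : ℝ} :
    Summable (fun j : ℕ => (eps (j+1) x : ℝ) * (2:ℝ)^(-((j:ℤ)+1))) := by
  apply Summable.of_norm_bounded (g := fun j => (2⁻¹:ℝ)^(j+1))
  · exact (summable_geometric_of_lt_one (by norm_num) (by norm_num)).comp_injective
      (add_left_injective 1)
  · intro j
    rw [norm_mul, zpow_eq, norm_pow]
    have : ‖(2⁻¹:ℝ)‖ = 2⁻¹ := by norm_num
    rw [this]
    calc ‖((eps (j+1) x : ℤ):ℝ)‖ * (2⁻¹:ℝ)^(j+1) ≤ 1 * (2⁻¹:ℝ)^(j+1) := by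
          apply mul_le_mul_of_nonneg_right _ (by positivity)
          rw [Real.norm_eq_abs, abs_le]
          exact ⟨by linarith [eps_cast_nonneg (j+1) x], eps_cast_le_one _ _⟩
      _ = _ := one_mul _

lemma tsum_eps {x : ℝ} (hx : x ∈ Set.Ioc (0:ℝ) 1) :
    ∑' j : ℕ, (eps (j+1) x : ℝ) * (2:ℝ)^(-((j:ℤ)+1)) = x :=
  (hasSum_eps hx).tsum_eq

/-! ### Integrability and integrals -/

lemma measurable_HaarH : Measurable HaarH := by
  unfold HaarH
  exact (measurable_const.indicator measurableSet_Ioc).sub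
    (measurable_const.indicator measurableSet_Ioc)

lemma measurable_HaarNK (n k : ℕ) : Measurable (HaarNK n k) := by
  unfold HaarNK
  exact measurable_const.mul (measurable_HaarH.comp (by fun_prop))

lemma intervalIntegrable_HaarNK (n k : ℕ) (a b : ℝ) :
    IntervalIntegrable (HaarNK n k) volume a b := by
  rw [intervalIntegrable_iff]
  apply MeasureTheory.Measure.integrableOn_of_bounded (M := Real.sqrt 2 ^ n)
  · exact (measure_Ioc_lt_top).ne
  · exact (measurable_HaarNK n k).aestronglyMeasurable
  · exact MeasureTheory.ae_of_all _ (fun t => by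
      rw [Real.norm_eq_abs]; exact abs_HaarNK_le n k t)

lemma intervalIntegrable_HaarH (a b : ℝ) :
    IntervalIntegrable HaarH volume a b := by
  rw [intervalIntegrable_iff]
  apply MeasureTheory.Measure.integrableOn_of_bounded (M := 1)
  · exact (measure_Ioc_lt_top).ne
  · exact measurable_HaarH.aestronglyMeasurable
  · exact MeasureTheory.ae_of_all _ (fun t => by
      rw [Real.norm_eq_abs]; exact abs_HaarH_le t)

lemma intervalIntegrable_ind (c d a b : ℝ) :
    IntervalIntegrable ((Set.Ioc c d).indicator (1 : ℝ → ℝ)) volume a b := by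
  rw [intervalIntegrable_iff]
  exact (MeasureTheory.integrableOn_const (C := (1:ℝ)) measure_Ioc_lt_top.ne).indicator
    measurableSet_Ioc

lemma integral_zero_of {f : ℝ → ℝ} {a b : ℝ} (hab : a ≤ b)
    (h : ∀ t ∈ Set.Ioc a b, f t = 0) : ∫ t in a..b, f t = 0 := by
  rw [intervalIntegral.integral_of_le hab]
  rw [MeasureTheory.setIntegral_congr_fun measurableSet_Ioc h]
  simp

lemma integral_ind (a b c d : ℝ) (hab : a ≤ b) :
    ∫ t in a..b, (Set.Ioc c d).indicator (1 : ℝ → ℝ) t = max (min b d - max a c) 0 := by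
  rw [intervalIntegral.integral_of_le hab,
    MeasureTheory.setIntegral_indicator measurableSet_Ioc, Set.Ioc_inter_Ioc]
  simp only [Pi.one_apply]
  rw [MeasureTheory.setIntegral_const, Real.volume_real_Ioc, smul_eq_mul, mul_one]

lemma integral_HaarH (a b : ℝ) (hab : a ≤ b) :
    ∫ t in a..b, HaarH t
      = max (min b (1/2) - max a 0) 0 - max (min b 1 - max a (1/2)) 0 := by
  unfold HaarH
  rw [intervalIntegral.integral_sub (intervalIntegrable_ind _ _ _ _)
    (intervalIntegrable_ind _ _ _ _), integral_ind a b _ _ hab, integral_ind a b _ _ hab]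

lemma integral_HaarH_zero_one : ∫ t in (0:ℝ)..1, HaarH t = 0 := by
  rw [integral_HaarH 0 1 (by norm_num)]
  norm_num

lemma integral_HaarNK_zero_one {n k : ℕ} (hk : k < 2^n) :
    ∫ t in (0:ℝ)..1, HaarNK n k t = 0 := by
  have hne : (2:ℝ)^n ≠ 0 := by positivity
  have h1 : ∫ t in (0:ℝ)..1, HaarNK n k t
      = Real.sqrt 2 ^ n * ∫ t in (0:ℝ)..1, HaarH ((2:ℝ)^n * t + (-(k:ℝ))) := by
    rw [← intervalIntegral.integral_const_mul]
    apply intervalIntegral.integral_congr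
    intro t _
    rw [HaarNK, sub_eq_add_neg]
  rw [h1, intervalIntegral.integral_comp_mul_add HaarH hne (-(k:ℝ))]
  have hk1 : (1:ℝ) ≤ 2^n - k := by
    have : (k:ℝ) + 1 ≤ 2^n := by exact_mod_cast hk
    linarith
  have hsplit1 : ∫ t in (-(k:ℝ))..0, HaarH t = 0 :=
    integral_zero_of (neg_nonpos.2 (Nat.cast_nonneg k)) (fun t ht => HaarH_of_nonpos ht.2)
  have hsplit2 : ∫ t in (1:ℝ)..(2^n - k), HaarH t = 0 :=
    integral_zero_of (by linarith) (fun t ht => HaarH_of_gt ht.1)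
  have hadd1 : ∫ t in (-(k:ℝ))..1, HaarH t = 0 := by
    rw [← intervalIntegral.integral_add_adjacent_intervals
      (intervalIntegrable_HaarH _ _) (intervalIntegrable_HaarH (0:ℝ) 1),
      hsplit1, integral_HaarH_zero_one]
    norm_num
  have hadd2 : ∫ t in (-(k:ℝ))..(2^n - k), HaarH t = 0 := by
    rw [← intervalIntegral.integral_add_adjacent_intervals
      (intervalIntegrable_HaarH (-(k:ℝ)) 1) (intervalIntegrable_HaarH 1 _),
      hadd1, hsplit2]
    norm_num
  rw [show (2:ℝ)^n * 0 + -(k:ℝ) = -(k:ℝ) by ring, show (2:ℝ)^n * 1 + -(k:ℝ) = 2^n - k by ring,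
    hadd2]
  simp

lemma integral_left {n k : ℕ} (hk : k < 2^n) {x : ℝ} (hx2 : x ≤ 1/2) :
    ∫ t in x..1, HaarNK (n+1) k t
      = Real.sqrt 2 / 2 * ∫ t in (2*x)..1, HaarNK n k t := by
  have h1 : ∫ t in x..1, HaarNK (n+1) k t
      = Real.sqrt 2 * ∫ t in x..1, HaarNK n k (2*t) := by
    rw [← intervalIntegral.integral_const_mul]
    exact intervalIntegral.integral_congr (fun t _ => HaarNK_left n k t)
  rw [h1, intervalIntegral.integral_comp_mul_left (HaarNK n k) (two_ne_zero)]
  have hsplit : ∫ t in (1:ℝ)..2, HaarNK n k t = 0 := by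
    apply integral_zero_of (by norm_num)
    intro t ht
    apply HaarNK_of_gt
    have h2 : (k:ℝ) + 1 ≤ 2^n := by exact_mod_cast hk
    have h3 : (2:ℝ)^n ≤ 2^n * t := by nlinarith [pow_pos (show (0:ℝ) < 2 by norm_num) n, ht.1]
    nlinarith [pow_pos (show (0:ℝ) < 2 by norm_num) n, ht.1]
  rw [show (2:ℝ) * 1 = 2 by norm_num,
    ← intervalIntegral.integral_add_adjacent_intervals
      (intervalIntegrable_HaarNK n k (2*x) 1) (intervalIntegrable_HaarNK n k 1 2), hsplit]
  rw [smul_eq_mul]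
  ring

lemma integral_right (n k : ℕ) {x : ℝ} :
    ∫ t in x..1, HaarNK (n+1) (2^n + k) t
      = Real.sqrt 2 / 2 * ∫ t in (2*x - 1)..1, HaarNK n k t := by
  have h1 : ∫ t in x..1, HaarNK (n+1) (2^n + k) t
      = Real.sqrt 2 * ∫ t in x..1, HaarNK n k (2*t + (-1)) := by
    rw [← intervalIntegral.integral_const_mul]
    apply intervalIntegral.integral_congr
    intro t _
    dsimp only
    rw [show (2:ℝ)*t + (-1) = 2*t - 1 by ring]
    exact HaarNK_right n k t
  rw [h1, intervalIntegral.integral_comp_mul_add (HaarNK n k) (two_ne_zero) (-1)]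
  rw [show (2:ℝ) * x + -1 = 2*x - 1 by ring, show (2:ℝ) * 1 + -1 = 1 by norm_num,
    smul_eq_mul]
  ring

/-! ### The series C_+ term -/

def Tm (n k : ℕ) (x : ℝ) (j : ℕ) : ℝ :=
  (2 : ℝ) ^ (-((j : ℤ) + 1)) *
    HaarNK n k ((x - (2 : ℝ) ^ (-((j : ℤ) + 1))) * (eps (j + 1) x : ℝ))

lemma zpow_neg_succ (m : ℤ) : (2:ℝ)^(-(m+1)) = 2^(-m)/2 := by
  rw [neg_add, zpow_add₀ (two_ne_zero), _root_.zpow_neg_one]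
  ring

lemma zpow_neg_pos (m : ℤ) : (0:ℝ) < 2^m := by positivity

lemma summable_Tm (n k : ℕ) (x : ℝ) : Summable (Tm n k x) := by
  apply Summable.of_norm_bounded (g := fun j => Real.sqrt 2 ^ n * (2⁻¹:ℝ)^(j+1))
  · exact ((summable_geometric_of_lt_one (by norm_num) (by norm_num)).comp_injective
      (add_left_injective 1)).mul_left _
  · intro j
    rw [Tm, norm_mul, zpow_eq, norm_pow]
    have h1 : ‖(2⁻¹:ℝ)‖ = 2⁻¹ := by norm_num
    rw [h1, mul_comm]
    apply mul_le_mul_of_nonneg_right _ (by positivity)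
    rw [Real.norm_eq_abs]
    exact abs_HaarNK_le n k _

lemma cast_succ (j : ℕ) : (((j+1:ℕ)):ℤ) + 1 = ((j:ℤ)+1) + 1 := by push_cast; ring

lemma Tm_succ_left (n k j : ℕ) (x : ℝ) :
    Tm (n+1) k x (j+1) = Real.sqrt 2 / 2 * Tm n k (2*x) j := by
  have hc : (2:ℝ)^(-(((j+1:ℕ):ℤ)+1)) = (2:ℝ)^(-((j:ℤ)+1))/2 := by
    rw [cast_succ, zpow_neg_succ]
  have heps : eps (j+1+1) x = eps (j+1) (2*x) := eps_succ_left (j+1) x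
  unfold Tm
  rw [hc, heps, HaarNK_left]
  rw [show 2 * ((x - (2:ℝ)^(-((j:ℤ)+1))/2) * ((eps (j+1) (2*x) : ℤ):ℝ))
      = (2*x - (2:ℝ)^(-((j:ℤ)+1))) * ((eps (j+1) (2*x):ℤ):ℝ) by ring]
  ring

lemma Tm_succ_right (n k j : ℕ) (x : ℝ) :
    Tm (n+1) (2^n + k) x (j+1) = Real.sqrt 2 / 2 * Tm n k (2*x - 1) j := by
  have hc : (2:ℝ)^(-(((j+1:ℕ):ℤ)+1)) = (2:ℝ)^(-((j:ℤ)+1))/2 := by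
    rw [cast_succ, zpow_neg_succ]
  have heps : eps (j+1+1) x = eps (j+1) (2*x - 1) := eps_succ_right (j+1) (by omega) x
  unfold Tm
  rw [hc, heps, HaarNK_right]
  rcases eps_zero_or_one (j+1) (2*x - 1) with h | h
  · rw [h]
    push_cast
    rw [mul_zero, mul_zero, mul_zero]
    rw [show (0:ℝ) - 1 = -1 by ring, HaarNK_zero,
      HaarNK_of_le (by nlinarith [pow_pos (show (0:ℝ) < 2 by norm_num) n,
        Nat.cast_nonneg (α := ℝ) k] : (2:ℝ)^n * (-1) ≤ (k:ℝ))]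
    ring
  · rw [h]
    push_cast
    rw [mul_one, mul_one]
    rw [show 2 * (x - (2:ℝ)^(-((j:ℤ)+1))/2) - 1 = 2*x - 1 - (2:ℝ)^(-((j:ℤ)+1)) by ring]
    ring

lemma Tm_zero_of_le {n k : ℕ} {x : ℝ} (hx : 0 < x) (hx2 : x ≤ 1/2) :
    Tm (n+1) k x 0 = 0 := by
  rw [Tm, eps_one_of_le hx hx2]
  push_cast
  rw [mul_zero, HaarNK_zero, mul_zero]

lemma tsum_Tm_left (n k : ℕ) {x : ℝ} (hx : 0 < x) (hx2 : x ≤ 1/2) :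
    ∑' j, Tm (n+1) k x j = Real.sqrt 2 / 2 * ∑' j, Tm n k (2*x) j := by
  rw [Summable.tsum_eq_zero_add (summable_Tm (n+1) k x), Tm_zero_of_le hx hx2, zero_add]
  rw [tsum_congr (fun j => Tm_succ_left n k j x), tsum_mul_left]

lemma tsum_Tm_right (n k : ℕ) {x : ℝ} (hx : 1/2 < x) (hx1 : x ≤ 1) :
    ∑' j, Tm (n+1) (2^n + k) x j = Real.sqrt 2 / 2 * ∑' j, Tm n k (2*x - 1) j := by
  rw [Summable.tsum_eq_zero_add (summable_Tm (n+1) (2^n + k) x)]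
  have h0 : Tm (n+1) (2^n + k) x 0 = 0 := by
    have hc : (2:ℝ)^(-(((0:ℕ):ℤ)+1)) = 2⁻¹ := by norm_num
    rw [Tm, hc, eps_one_of_gt hx hx1]
    push_cast
    rw [mul_one]
    apply mul_eq_zero_of_right
    apply HaarNK_of_le
    have hp : (0:ℝ) < 2^n := by positivity
    push_cast
    rw [pow_succ]
    nlinarith [Nat.cast_nonneg (α := ℝ) k]
  rw [h0, zero_add, tsum_congr (fun j => Tm_succ_right n k j x), tsum_mul_left]

lemma HaarNK_zero_zero (y : ℝ) : HaarNK 0 0 y = HaarH y := by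
  simp [HaarNK]

lemma tsum_Tm_left_top {n k : ℕ} (hk : k < 2^n) {x : ℝ} (hx : 1/2 < x) (hx1 : x ≤ 1) :
    ∑' j, Tm (n+1) k x j = Real.sqrt 2 / 2 * HaarNK n k (2*x - 1) := by
  rw [Summable.tsum_eq_zero_add (summable_Tm (n+1) k x)]
  have h0 : Tm (n+1) k x 0 = Real.sqrt 2 / 2 * HaarNK n k (2*x - 1) := by
    have hc : (2:ℝ)^(-(((0:ℕ):ℤ)+1)) = 2⁻¹ := by norm_num
    rw [Tm, hc, eps_one_of_gt hx hx1, Int.cast_one, mul_one, HaarNK_left,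
      show 2*(x - 2⁻¹) = 2*x - 1 by ring]
    ring
  have h1 : ∀ j : ℕ, Tm (n+1) k x (j+1) = 0 := by
    intro j
    rw [Tm]
    apply mul_eq_zero_of_right
    have heps := eps_succ_right (j+1) (by omega) x
    rcases eps_zero_or_one (j+1+1) x with h | h
    · rw [h, Int.cast_zero, mul_zero, HaarNK_zero]
    · rw [h, Int.cast_one, mul_one]
      apply HaarNK_of_gt
      have h2 : (2:ℝ)^(-((j+1:ℕ):ℤ)) < 2*x - 1 :=
        eps_pos (by omega) (by linarith) (heps.symm.trans h)
      have hc : (2:ℝ)^(-(((j+1:ℕ):ℤ)+1)) = (2:ℝ)^(-((j+1:ℕ):ℤ))/2 := zpow_neg_succ _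
      rw [hc, pow_succ]
      have hp : (0:ℝ) < 2^n := by positivity
      have hkc : (k:ℝ) + 1 ≤ 2^n := by exact_mod_cast hk
      nlinarith [zpow_neg_pos (-((j+1:ℕ):ℤ))]
  rw [h0, tsum_congr h1, tsum_zero, add_zero]

lemma tsum_Tm_right_bot (n k : ℕ) {x : ℝ} (hx2 : x ≤ 1/2) :
    ∑' j, Tm (n+1) (2^n + k) x j = 0 := by
  have h1 : ∀ j : ℕ, Tm (n+1) (2^n + k) x j = 0 := by
    intro j
    rw [Tm]
    apply mul_eq_zero_of_right
    rcases eps_zero_or_one (j+1) x with h | h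
    · rw [h, Int.cast_zero, mul_zero, HaarNK_zero]
    · rw [h, Int.cast_one, mul_one]
      apply HaarNK_of_le
      push_cast
      rw [pow_succ]
      have hp : (0:ℝ) < 2^n := by positivity
      nlinarith [zpow_neg_pos (-((j:ℤ)+1)), Nat.cast_nonneg (α := ℝ) k]
  rw [tsum_congr h1, tsum_zero]

lemma tsum_Tm_base_left {x : ℝ} (hx : 0 < x) (hx2 : x ≤ 1/2) :
    ∑' j, Tm 0 0 x j = x := by
  have h1 : ∀ j : ℕ, Tm 0 0 x j = (eps (j+1) x : ℝ) * (2:ℝ)^(-((j:ℤ)+1)) := by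
    intro j
    rw [Tm, HaarNK_zero_zero]
    rcases eps_zero_or_one (j+1) x with h | h
    · rw [h, Int.cast_zero, mul_zero, HaarH_of_nonpos le_rfl, mul_zero, zero_mul]
    · rw [h, Int.cast_one, mul_one, one_mul]
      have hpos : (2:ℝ)^(-((j+1:ℕ):ℤ)) < x := eps_pos (by omega) hx h
      have hc : (2:ℝ)^(-((j+1:ℕ):ℤ)) = (2:ℝ)^(-((j:ℤ)+1)) := by
        rw [show -((j+1:ℕ):ℤ) = -((j:ℤ)+1) by push_cast; ring]
      rw [hc] at hpos
      rw [HaarH_of_left (by linarith) (by linarith [zpow_neg_pos (-((j:ℤ)+1))]), mul_one]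
  rw [tsum_congr h1, tsum_eps ⟨hx, by linarith⟩]

lemma tsum_Tm_base_right {x : ℝ} (hx : 1/2 < x) (hx1 : x ≤ 1) :
    ∑' j, Tm 0 0 x j = 1 - x := by
  rw [Summable.tsum_eq_zero_add (summable_Tm 0 0 x)]
  have h0 : Tm 0 0 x 0 = 2⁻¹ := by
    have hc : (2:ℝ)^(-(((0:ℕ):ℤ)+1)) = 2⁻¹ := by norm_num
    rw [Tm, hc, eps_one_of_gt hx hx1, Int.cast_one, mul_one, HaarNK_zero_zero,
      HaarH_of_left (by linarith) (by linarith), mul_one]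
  have h1 : ∀ j : ℕ, Tm 0 0 x (j+1) =
      -((eps (j+1+1) x : ℝ) * (2:ℝ)^(-(((j+1:ℕ):ℤ)+1))) := by
    intro j
    rw [Tm, HaarNK_zero_zero]
    have heps := eps_succ_right (j+1) (by omega) x
    rcases eps_zero_or_one (j+1+1) x with h | h
    · rw [h, Int.cast_zero, mul_zero, HaarH_of_nonpos le_rfl, mul_zero, zero_mul, neg_zero]
    · rw [h, Int.cast_one, mul_one, one_mul]
      have hpos : (2:ℝ)^(-((j+1:ℕ):ℤ)) < 2*x - 1 :=
        eps_pos (by omega) (by linarith) (heps.symm.trans h)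
      have hc : (2:ℝ)^(-(((j+1:ℕ):ℤ)+1)) = (2:ℝ)^(-((j+1:ℕ):ℤ))/2 := zpow_neg_succ _
      rw [hc, HaarH_of_right (by linarith) (by linarith [zpow_neg_pos (-((j+1:ℕ):ℤ))])]
      ring
  rw [h0, tsum_congr h1, tsum_neg]
  have h2 := tsum_eps (x := x) ⟨by linarith, hx1⟩
  rw [Summable.tsum_eq_zero_add summable_eps, eps_one_of_gt hx hx1, Int.cast_one, one_mul,
    show (2:ℝ)^(-(((0:ℕ):ℤ)+1)) = 2⁻¹ by norm_num] at h2
  linarith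

/-! ### Matrix block lemmas -/

lemma blockEquiv_inl (n : ℕ) (i : Fin (2^n)) : ((blockEquiv n (Sum.inl i)) : ℕ) = i := by
  simp [blockEquiv, finCongr_apply]

lemma blockEquiv_inr (n : ℕ) (i : Fin (2^n)) :
    ((blockEquiv n (Sum.inr i)) : ℕ) = 2^n + i := by
  simp [blockEquiv, finCongr_apply]
  omega

lemma Dplus_succ (n : ℕ) : Dplus (n+1) = Matrix.reindex (blockEquiv n) (blockEquiv n)
    ((1 / 2 : ℝ) • Matrix.fromBlocks (Dplus n) 0 1 (Dplus n)) := rfl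

lemma Dplus_inl_inl (n : ℕ) (i k : Fin (2^n)) :
    Dplus (n+1) (blockEquiv n (Sum.inl i)) (blockEquiv n (Sum.inl k))
      = (1/2 : ℝ) * Dplus n i k := by
  rw [Dplus_succ, Matrix.reindex_apply, Matrix.submatrix_apply, Equiv.symm_apply_apply,
    Equiv.symm_apply_apply, Matrix.smul_apply, Matrix.fromBlocks_apply₁₁, smul_eq_mul]

lemma Dplus_inr_inl (n : ℕ) (i k : Fin (2^n)) :
    Dplus (n+1) (blockEquiv n (Sum.inr i)) (blockEquiv n (Sum.inl k))
      = (1/2 : ℝ) * (if i = k then 1 else 0) := by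
  rw [Dplus_succ, Matrix.reindex_apply, Matrix.submatrix_apply, Equiv.symm_apply_apply,
    Equiv.symm_apply_apply, Matrix.smul_apply, Matrix.fromBlocks_apply₂₁, smul_eq_mul,
    Matrix.one_apply]

lemma Dplus_inl_inr (n : ℕ) (i k : Fin (2^n)) :
    Dplus (n+1) (blockEquiv n (Sum.inl i)) (blockEquiv n (Sum.inr k)) = 0 := by
  rw [Dplus_succ, Matrix.reindex_apply, Matrix.submatrix_apply, Equiv.symm_apply_apply,
    Equiv.symm_apply_apply, Matrix.smul_apply, Matrix.fromBlocks_apply₁₂]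
  simp

lemma Dplus_inr_inr (n : ℕ) (i k : Fin (2^n)) :
    Dplus (n+1) (blockEquiv n (Sum.inr i)) (blockEquiv n (Sum.inr k))
      = (1/2 : ℝ) * Dplus n i k := by
  rw [Dplus_succ, Matrix.reindex_apply, Matrix.submatrix_apply, Equiv.symm_apply_apply,
    Equiv.symm_apply_apply, Matrix.smul_apply, Matrix.fromBlocks_apply₂₂, smul_eq_mul]

theorem main (n : ℕ) : ∀ (k : Fin (2^n)) (x : ℝ), x ∈ Set.Ioc (0:ℝ) 1 →
    (∑' j : ℕ, Tm n (↑k) x j) + (∫ t in x..(1:ℝ), HaarNK n (↑k) t)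
      = ∑ l : Fin (2^n), Dplus n l k * HaarNK n (↑l) x := by
  induction n with
  | zero =>
    intro k x hx
    have hk : (k : ℕ) = 0 := by omega
    have hR : ∑ l : Fin (2^0), Dplus 0 l k * HaarNK 0 (↑l) x = 0 := by
      simp [show Dplus 0 = (0 : Matrix (Fin (2^0)) (Fin (2^0)) ℝ) from rfl]
    rw [hR]
    simp only [hk]
    have hI : ∫ t in x..(1:ℝ), HaarNK 0 0 t = ∫ t in x..(1:ℝ), HaarH t :=
      intervalIntegral.integral_congr (fun t _ => HaarNK_zero_zero t)
    rw [hI, integral_HaarH x 1 hx.2,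
      show min (1:ℝ) (1/2) = 1/2 by norm_num, show min (1:ℝ) 1 = 1 by norm_num,
      max_eq_left (le_of_lt hx.1)]
    rcases le_or_gt x (1/2) with h | h
    · rw [tsum_Tm_base_left hx.1 h, max_eq_right h,
        max_eq_left (by linarith : (0:ℝ) ≤ 1/2 - x),
        max_eq_left (by norm_num : (0:ℝ) ≤ 1 - 1/2)]
      ring
    · rw [tsum_Tm_base_right h hx.2, max_eq_left h.le,
        max_eq_right (by linarith : 1/2 - x ≤ (0:ℝ)),
        max_eq_left (by linarith [hx.2] : (0:ℝ) ≤ 1 - x)]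
      ring
  | succ n ih =>
    intro k x hx
    obtain ⟨hx0, hx1⟩ := hx
    have hp : (0:ℝ) < 2^n := by positivity
    obtain ⟨s, rfl⟩ : ∃ s, blockEquiv n s = k := ⟨(blockEquiv n).symm k, (blockEquiv n).apply_symm_apply k⟩
    rw [← Equiv.sum_comp (blockEquiv n)
      (fun l => Dplus (n+1) l (blockEquiv n s) * HaarNK (n+1) (↑l) x), Fintype.sum_sum_type]
    cases s with
    | inl k0 =>
      have hkc : ((k0:ℕ):ℝ) + 1 ≤ 2^n := by exact_mod_cast k0.isLt
      have hsum1 : ∑ i : Fin (2^n), Dplus (n+1) (blockEquiv n (Sum.inl i))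
            (blockEquiv n (Sum.inl k0)) * HaarNK (n+1) (↑(blockEquiv n (Sum.inl i))) x
          = Real.sqrt 2/2 * ∑ i : Fin (2^n), Dplus n i k0 * HaarNK n (↑i) (2*x) := by
        rw [Finset.mul_sum]
        apply Finset.sum_congr rfl
        intro i _
        rw [Dplus_inl_inl, blockEquiv_inl, HaarNK_left]
        ring
      have hsum2 : ∑ i : Fin (2^n), Dplus (n+1) (blockEquiv n (Sum.inr i))
            (blockEquiv n (Sum.inl k0)) * HaarNK (n+1) (↑(blockEquiv n (Sum.inr i))) x
          = Real.sqrt 2/2 * HaarNK n (↑k0) (2*x - 1) := by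
        have hterm : ∀ i : Fin (2^n), Dplus (n+1) (blockEquiv n (Sum.inr i))
              (blockEquiv n (Sum.inl k0)) * HaarNK (n+1) (↑(blockEquiv n (Sum.inr i))) x
            = if i = k0 then (1/2:ℝ) * HaarNK (n+1) (2^n + (k0:ℕ)) x else 0 := by
          intro i
          rw [Dplus_inr_inl, blockEquiv_inr]
          split_ifs with hik
          · rw [hik]; ring
          · ring
        rw [Finset.sum_congr rfl (fun i _ => hterm i), Finset.sum_ite_eq' Finset.univ k0
          (fun _ => (1/2:ℝ) * HaarNK (n+1) (2^n + (k0:ℕ)) x), if_pos (Finset.mem_univ k0),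
          HaarNK_right]
        ring
      rw [hsum1, hsum2]
      simp only [blockEquiv_inl n k0]
      rcases le_or_gt x (1/2) with h | h
      · rw [tsum_Tm_left n (↑k0) hx0 h, integral_left k0.isLt h, ← mul_add,
          ih k0 (2*x) ⟨by linarith, by linarith⟩,
          HaarNK_of_le (show (2:ℝ)^n * (2*x-1) ≤ ((k0:ℕ):ℝ) by nlinarith [Nat.cast_nonneg (α := ℝ) (k0:ℕ)])]
        ring
      · have hI : ∫ t in x..(1:ℝ), HaarNK (n+1) (↑k0) t = 0 := by
          apply integral_zero_of hx1
          intro t ht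
          apply HaarNK_of_gt
          rw [pow_succ]
          nlinarith [ht.1]
        have hz : ∀ i : Fin (2^n), HaarNK n (↑i) (2*x) = 0 := by
          intro i
          apply HaarNK_of_gt
          have : ((i:ℕ):ℝ) + 1 ≤ 2^n := by exact_mod_cast i.isLt
          nlinarith
        rw [tsum_Tm_left_top k0.isLt h hx1, hI]
        simp only [hz, mul_zero, Finset.sum_const_zero]
        ring
    | inr k0 =>
      have hsum1 : ∑ i : Fin (2^n), Dplus (n+1) (blockEquiv n (Sum.inl i))
            (blockEquiv n (Sum.inr k0)) * HaarNK (n+1) (↑(blockEquiv n (Sum.inl i))) x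
          = 0 := by
        simp only [Dplus_inl_inr, zero_mul, Finset.sum_const_zero]
      have hsum2 : ∑ i : Fin (2^n), Dplus (n+1) (blockEquiv n (Sum.inr i))
            (blockEquiv n (Sum.inr k0)) * HaarNK (n+1) (↑(blockEquiv n (Sum.inr i))) x
          = Real.sqrt 2/2 * ∑ i : Fin (2^n), Dplus n i k0 * HaarNK n (↑i) (2*x - 1) := by
        rw [Finset.mul_sum]
        apply Finset.sum_congr rfl
        intro i _
        rw [Dplus_inr_inr, blockEquiv_inr, HaarNK_right]
        ring
      rw [hsum1, hsum2, zero_add]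
      simp only [blockEquiv_inr n k0]
      rcases le_or_gt x (1/2) with h | h
      · rw [tsum_Tm_right_bot n (↑k0) h, integral_right n (↑k0)]
        have h1 : ∫ t in (2*x-1)..0, HaarNK n (↑k0) t = 0 := by
          apply integral_zero_of (by linarith)
          intro t ht
          exact HaarNK_of_le (by nlinarith [Nat.cast_nonneg (α := ℝ) (k0:ℕ), ht.2])
        have hsplit : ∫ t in (2*x-1)..1, HaarNK n (↑k0) t = 0 := by
          rw [← intervalIntegral.integral_add_adjacent_intervals
            (intervalIntegrable_HaarNK n (↑k0) (2*x-1) 0)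
            (intervalIntegrable_HaarNK n (↑k0) 0 1),
            integral_HaarNK_zero_one k0.isLt, h1]
          ring
        rw [hsplit]
        have hz : ∀ i : Fin (2^n), HaarNK n (↑i) (2*x - 1) = 0 := by
          intro i
          exact HaarNK_of_le (by nlinarith [Nat.cast_nonneg (α := ℝ) (i:ℕ)])
        simp only [hz, mul_zero, Finset.sum_const_zero]
        ring
      · rw [tsum_Tm_right n (↑k0) h hx1, integral_right n (↑k0), ← mul_add,
          ih k0 (2*x - 1) ⟨by linarith, by linarith⟩]

/-- `P_+[H_{n,k}] = C_+[H_{n,k}] + L'[H_{n,k}] = Σ_l (D_+^{(n)})_{l,k} H_{n,l}` pointwise on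
`(0,1]`: the operator `P_+ = C_+ + L'` maps each Haar scale subspace `W_n` into itself,
with matrix `D_+^{(n)}`. -/
theorem stmt10 (n : ℕ) (k : Fin (2 ^ n)) (x : ℝ) (hx : x ∈ Set.Ioc (0 : ℝ) 1) :
    (∑' j : ℕ, (2 : ℝ) ^ (-((j : ℤ) + 1)) *
        HaarNK n k ((x - (2 : ℝ) ^ (-((j : ℤ) + 1))) * (eps (j + 1) x : ℝ))) +
      (∫ t in x..(1 : ℝ), HaarNK n k t) =
      ∑ l : Fin (2 ^ n), Dplus n l k * HaarNK n l x := by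
  exact main n k x hx
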